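/- The partial fraction expansion π csc(πx) − 1/x = 2x ∑_{k=1}^∞ (−1)^{k+1}/(k² − x²) holds for all real x ∉ ℤ. -/

import Mathlib

open Real Complex intervalIntegral

lemma exp_sub_exp (z : ℂ) : Complex.exp (z * Complex.I) - Complex.exp (-(z * Complex.I)) =
    2 * Complex.I * Complex.sin z := by
  rw [Complex.sin]
  have : Complex.I * Complex.I = -1 := Complex.I_mul_I
  field_simp
  ring_nf
  rw [Complex.I_sq]
  ring

lemma int_exp (a : ℝ) (ha : a ≠ 0) :
    (∫ t : ℝ in (-π)..π, Complex.exp ((a : ℂ) * Complex.I * t)) =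
      2 * Real.sin (a * π) / a := by
  have hc : (a : ℂ) * Complex.I ≠ 0 := by simp [Complex.ext_iff, ha]
  rw [integral_exp_mul_complex hc]
  have h1 : (a : ℂ) * Complex.I * (π : ℝ) = ((a * π : ℝ) : ℂ) * Complex.I := by push_cast; ring
  have h2 : (a : ℂ) * Complex.I * ((-π : ℝ) : ℂ) = -(((a * π : ℝ) : ℂ) * Complex.I) := by
    push_cast; ring
  have ha' : (a : ℂ) ≠ 0 := by exact_mod_cast ha
  rw [h1, h2, exp_sub_exp, Complex.ofReal_sin, div_eq_div_iff hc ha']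
  ring

lemma neg_one_zpow_neg (m : ℤ) : (-1:ℝ)^(-m) = (-1)^m := by
  rw [zpow_neg, ← inv_zpow, inv_neg, inv_one]

lemma coeff (x : ℝ) (hx : ∀ m : ℤ, x ≠ (m : ℝ)) (n : ℤ) :
    fourierCoeffOn (by linarith [Real.pi_pos] : (-π:ℝ) < -π + 2*π)
      (fun t : ℝ => Complex.cos (x*t)) n
    = ((-1:ℂ)^n * Real.sin (π*x) * x) / (π * ((x:ℂ)^2 - (n:ℂ)^2)) := by
  have hπ : π ≠ 0 := pi_ne_zero
  have h1 : x - n ≠ 0 := sub_ne_zero.2 (hx n)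
  have h2 : -(x + n) ≠ 0 := by
    have := hx (-n); push_cast at this; intro h; apply this; linarith
  rw [fourierCoeffOn_eq_integral]
  simp only [fourier_coe_apply]
  rw [show (-π + 2*π : ℝ) = π by ring]
  rw [show (π - -π : ℝ) = 2*π by ring]
  have key : ∀ t : ℝ, (Complex.exp (2*(π:ℂ)*Complex.I*((-n : ℤ):ℂ)*(t:ℂ)/((2*π:ℝ):ℂ)) •
        Complex.cos ((x:ℂ)*(t:ℂ)))
      = (Complex.exp (((x - n : ℝ):ℂ) * Complex.I * t)
          + Complex.exp (((-(x + n) : ℝ):ℂ) * Complex.I * t)) / 2 := by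
    intro t
    have hA : 2*(π:ℂ)*Complex.I*((-n : ℤ):ℂ)*(t:ℂ)/((2*π:ℝ):ℂ) = ((-n : ℝ):ℂ)*Complex.I*t := by
      have : (π:ℂ) ≠ 0 := Complex.ofReal_ne_zero.2 hπ
      push_cast
      field_simp
    rw [hA, smul_eq_mul, Complex.cos, ← mul_div_assoc, mul_add, ← Complex.exp_add,
      ← Complex.exp_add]
    congr 2 <;> push_cast <;> ring
  rw [intervalIntegral.integral_congr (fun t _ => key t)]
  have hcont : ∀ a : ℝ, Continuous fun t : ℝ => Complex.exp ((a:ℂ) * Complex.I * t) := by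
    intro a
    exact Complex.continuous_exp.comp (by continuity)
  rw [show (fun t : ℝ => (Complex.exp (((x - n : ℝ):ℂ) * Complex.I * t)
          + Complex.exp (((-(x + n) : ℝ):ℂ) * Complex.I * t)) / 2)
      = fun t : ℝ => (Complex.exp (((x - n : ℝ):ℂ) * Complex.I * t)
          + Complex.exp (((-(x + n) : ℝ):ℂ) * Complex.I * t)) / 2 from rfl]
  rw [intervalIntegral.integral_div, intervalIntegral.integral_add
      ((hcont _).intervalIntegrable _ _) ((hcont _).intervalIntegrable _ _)]
  rw [int_exp _ h1, int_exp _ h2]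
  have e1 : Real.sin ((x - n) * π) = (-1:ℝ)^n * Real.sin (π * x) := by
    rw [show (x - n) * π = x * π + (-n : ℤ) * π by push_cast; ring,
      Real.sin_add_int_mul_pi, neg_one_zpow_neg, mul_comm x π]
  have e2 : Real.sin (-(x + n) * π) = -((-1:ℝ)^n * Real.sin (π * x)) := by
    rw [show -(x + n) * π = -(x * π + (n : ℤ) * π) by push_cast; ring, Real.sin_neg,
      Real.sin_add_int_mul_pi, mul_comm x π]
  rw [e1]
  have hπC : (π:ℂ) ≠ 0 := Complex.ofReal_ne_zero.2 hπ
  have h1C : (x:ℂ) - n ≠ 0 := by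
    rw [sub_ne_zero]; exact_mod_cast hx n
  have h2C : (x:ℂ) + n ≠ 0 := by
    have h2' : x + (n:ℝ) ≠ 0 := fun h => h2 (by rw [h, neg_zero])
    exact_mod_cast h2'
  have hx2 : (x:ℂ)^2 - (n:ℂ)^2 ≠ 0 := by
    rw [show (x:ℂ)^2 - (n:ℂ)^2 = ((x:ℂ) - n) * ((x:ℂ) + n) by ring]
    exact mul_ne_zero h1C h2C
  have e3 : (2 * ((Real.sin (-(x + (n:ℝ)) * π) : ℝ) : ℂ)) / (((-(x + (n:ℝ)) : ℝ)) : ℂ)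
      = (2 * ((((-1:ℝ)^n * Real.sin (π*x) : ℝ)) : ℂ)) / (((x + (n:ℝ) : ℝ)) : ℂ) := by
    rw [e2]
    push_cast
    rw [mul_neg, neg_div_neg_eq]
  rw [e3, real_smul]
  push_cast
  field_simp
  ring

lemma neg_one_zpow_negC (m : ℤ) : (-1:ℂ)^(-m) = (-1)^m := by
  rw [zpow_neg, ← inv_zpow, inv_neg, inv_one]

theorem cosecant_partial_fractions (x : ℝ) (hx : ∀ m : ℤ, x ≠ (m : ℝ)) :
    π * (1 / Real.sin (π * x)) - 1 / x =
      2 * x * ∑' k : ℕ, (-1 : ℝ) ^ k / (((k : ℝ) + 1) ^ 2 - x ^ 2) := by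
  have hπ : (0:ℝ) < π := pi_pos
  have hx0 : x ≠ 0 := by simpa using hx 0
  have hsin : Real.sin (π * x) ≠ 0 := by
    intro h
    rcases Real.sin_eq_zero_iff.1 h with ⟨m, hm⟩
    exact hx m (mul_left_cancel₀ pi_ne_zero (by rw [← hm]; ring)).symm
  have hsinC : Complex.sin ((π:ℂ) * x) ≠ 0 := by
    rw [← Complex.ofReal_mul, ← Complex.ofReal_sin]
    exact_mod_cast hsin
  have hx2 : ∀ n : ℤ, (x:ℂ)^2 - (n:ℂ)^2 ≠ 0 := by
    intro n
    have h1C : (x:ℂ) - n ≠ 0 := by rw [sub_ne_zero]; exact_mod_cast hx n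
    have h2C : (x:ℂ) + n ≠ 0 := by
      have h2' : x + (n:ℝ) ≠ 0 := by
        intro h; exact hx (-n) (by push_cast; linarith)
      exact_mod_cast h2'
    rw [show (x:ℂ)^2 - (n:ℂ)^2 = ((x:ℂ) - n) * ((x:ℂ) + n) by ring]
    exact mul_ne_zero h1C h2C
  haveI hT : Fact (0 < 2*π) := ⟨by positivity⟩
  set g : ℝ → ℂ := fun t => Complex.cos (x*t) with hg
  have hg_per : g (-π) = g (-π + 2*π) := by
    simp only [hg]
    push_cast
    rw [show (x:ℂ) * (-π + 2*π) = x*π by ring, show (x:ℂ) * (-π:ℂ) = -((x:ℂ)*π) by ring,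
      Complex.cos_neg]
  have hgc : Continuous g := by
    simp only [hg]; exact Complex.continuous_cos.comp (by continuity)
  set F : C(AddCircle (2*π), ℂ) :=
    ⟨AddCircle.liftIco (2*π) (-π) g, AddCircle.liftIco_continuous hg_per hgc.continuousOn⟩ with hF
  set c : ℤ → ℂ := fun n => ((-1:ℂ)^n * Real.sin (π*x) * x) / (π * ((x:ℂ)^2 - (n:ℂ)^2)) with hc
  have hcoeff : ∀ n : ℤ, fourierCoeff (F : AddCircle (2*π) → ℂ) n = c n := by
    intro n
    show fourierCoeff (AddCircle.liftIco (2*π) (-π) g) n = c n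
    rw [fourierCoeff_liftIco_eq]
    exact coeff x hx n
  -- summability
  have hsummable : Summable (fun n : ℤ => 1 / |x^2 - (n:ℝ)^2|) := by
    have hnat : Summable (fun k : ℕ => 1 / |x^2 - (k:ℝ)^2|) := by
      set N : ℕ := ⌈|x|⌉₊ + 1 with hN
      have hNx : |x| + 1 ≤ (N:ℝ) := by
        have := Nat.le_ceil |x|
        push_cast [hN]; linarith
      rw [← summable_nat_add_iff N]
      have hbase : Summable (fun k : ℕ => 1 / ((k:ℝ)+1)^2) := by
        have := (summable_nat_add_iff 1).mpr <|
          Real.summable_one_div_nat_pow.mpr (by norm_num : 1 < 2)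
        exact this.congr fun k => by push_cast; norm_num
      refine hbase.of_nonneg_of_le (fun k => by positivity) fun k => ?_
      have hge : ((k:ℝ)+1)^2 ≤ (↑(k+N):ℝ)^2 - x^2 := by
        have h1 : (k:ℝ) + 1 ≤ (↑(k+N):ℝ) - |x| := by
          have := Nat.le_ceil |x|; push_cast; linarith
        have h2 : (k:ℝ) + 1 ≤ (↑(k+N):ℝ) + |x| := by
          have := abs_nonneg x; have := Nat.le_ceil |x|; push_cast; linarith
        have h3 : (0:ℝ) ≤ (k:ℝ) + 1 := by positivity
        calc ((k:ℝ)+1)^2 ≤ ((↑(k+N):ℝ) - |x|) * ((↑(k+N):ℝ) + |x|) := by nlinarith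
        _ = (↑(k+N):ℝ)^2 - x^2 := by nlinarith [_root_.sq_abs x]
      have habs : |x^2 - (↑(k+N):ℝ)^2| = (↑(k+N):ℝ)^2 - x^2 := by
        rw [abs_sub_comm]; exact abs_of_nonneg (by nlinarith [sq_nonneg ((k:ℝ)+1)])
      rw [habs]
      apply one_div_le_one_div_of_le (by positivity) hge
    exact Summable.of_nat_of_neg hnat (hnat.congr fun k => by norm_num)
  have hnorm : ∀ n : ℤ, ‖c n‖ = |Real.sin (π*x) * x| / π * (1/|x^2 - (n:ℝ)^2|) := by
    intro n
    have hcast : c n = ((((-1):ℝ)^n * (Real.sin (π*x) * x) / (π * (x^2 - (n:ℝ)^2)) : ℝ) : ℂ) := by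
      rw [hc]; push_cast; ring
    have habs1 : |(-1:ℝ)^n| = 1 := by
      rcases Int.even_or_odd n with he | ho
      · rw [he.neg_one_zpow]; norm_num
      · rw [ho.neg_one_zpow]; norm_num
    rw [hcast, Complex.norm_real, Real.norm_eq_abs, abs_div,
      show |π * (x^2 - (n:ℝ)^2)| = π * |x^2 - (n:ℝ)^2| from by rw [abs_mul, abs_of_pos hπ],
      abs_mul, habs1, one_mul]
    ring
  have hsumc : Summable c := by
    apply Summable.of_norm
    exact ((hsummable.mul_left (|Real.sin (π*x) * x| / π)).congr fun n => (hnorm n).symm)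
  -- pointwise Fourier sum at 0
  have h0 : HasSum c 1 := by
    have hp := has_pointwise_sum_fourier_series_of_summable
      (hsumc.congr fun n => (hcoeff n).symm) (0 : AddCircle (2*π))
    have hF0 : F (0 : AddCircle (2*π)) = 1 := by
      show AddCircle.liftIco (2*π) (-π) g ((0:ℝ) : AddCircle (2*π)) = 1
      rw [AddCircle.liftIco_coe_apply
        (by constructor <;> [linarith; linarith] : (0:ℝ) ∈ Set.Ico (-π) (-π+2*π))]
      simp [hg]
    rw [hF0] at hp
    have hfun : (fun i : ℤ => fourierCoeff (⇑F) i • fourier i (0 : AddCircle (2*π))) = c := by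
      funext i
      rw [hcoeff, fourier_eval_zero, smul_eq_mul, mul_one]
    rwa [hfun] at hp
  have hπC : (π:ℂ) ≠ 0 := Complex.ofReal_ne_zero.2 pi_ne_zero
  have hxC : (x:ℂ) ≠ 0 := Complex.ofReal_ne_zero.2 hx0
  set d : ℤ → ℂ := fun n => (-1:ℂ)^n * x / ((x:ℂ)^2 - (n:ℂ)^2) with hdd
  have hd : HasSum d ((π:ℂ) / Complex.sin ((π:ℂ)*x)) := by
    have h1 := h0.mul_left ((π:ℂ) / Complex.sin ((π:ℂ)*x))
    rw [mul_one] at h1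
    have hfun : (fun n : ℤ => (π:ℂ)/Complex.sin ((π:ℂ)*x) * c n) = d := by
      funext n
      rw [hc, hdd]
      have hsx : ((Real.sin (π*x) : ℝ) : ℂ) = Complex.sin ((π:ℂ)*x) := by push_cast; rfl
      rw [hsx]
      have := hx2 n
      field_simp
    rwa [hfun] at h1
  have hnat := hd.nat_add_neg
  have hd0 : d 0 = 1 / x := by
    rw [hdd]
    simp
    field_simp
  set e : ℕ → ℂ := fun k => 2*(-1:ℂ)^k * x / ((x:ℂ)^2 - ((k:ℕ):ℂ)^2) with he
  have h5 : HasSum e ((π:ℂ)/Complex.sin ((π:ℂ)*x) + 1/x) := by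
    rw [← hd0]
    have hfun : (fun k : ℕ => d (k : ℤ) + d (-(k : ℤ))) = e := by
      funext k
      rw [hdd, he]
      simp only [neg_one_zpow_negC, zpow_natCast]
      push_cast
      ring
    rwa [hfun] at hnat
  have h6 := (hasSum_nat_add_iff' (f := e) 1).2 h5
  rw [Finset.sum_range_one] at h6
  have he0 : e 0 = 2 / x := by
    rw [he]; simp; field_simp
  rw [he0] at h6
  have hfun3 : (fun k : ℕ => e (k + 1)) =
      fun k : ℕ => ((2 * x * ((-1:ℝ)^k / (((k:ℝ)+1)^2 - x^2)) : ℝ) : ℂ) := by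
    funext k
    rw [he]
    have hne : ((k:ℝ)+1)^2 - x^2 ≠ 0 := by
      intro h
      apply hx2 ((k:ℤ)+1)
      have : ((((k:ℝ)+1)^2 - x^2 : ℝ) : ℂ) = 0 := by rw [h]; norm_num
      push_cast at this ⊢
      linear_combination -this
    have hneC : (((k:ℝ)+1)^2 - (x:ℂ)^2 : ℂ) ≠ 0 := by
      intro h; apply hne
      have : ((((k:ℝ)+1)^2 - x^2 : ℝ) : ℂ) = 0 := by push_cast at h ⊢; linear_combination h
      exact_mod_cast this
    have hx2' : (x:ℂ)^2 - ((k:ℂ)+1)^2 ≠ 0 := by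
      intro h; apply hneC; push_cast; linear_combination -h
    have hB : ((k:ℂ)+1)^2 - (x:ℂ)^2 ≠ 0 :=
      fun h => hx2 ((k:ℤ)+1) (by push_cast; linear_combination -h)
    have hA : (x:ℂ)^2 - ((k:ℂ)+1)^2 ≠ 0 := fun h => hB (by linear_combination -h)
    push_cast
    rw [pow_succ, ← mul_div_assoc, div_eq_div_iff hA hB]
    ring
  rw [hfun3] at h6
  have h7 : HasSum (fun k : ℕ => 2 * x * ((-1:ℝ)^k / (((k:ℝ)+1)^2 - x^2)))
      (π * (1 / Real.sin (π * x)) - 1 / x) := by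
    rw [← Complex.hasSum_ofReal]
    convert h6 using 2
    · rfl
    · rw [Complex.ofReal_sub, Complex.ofReal_mul, Complex.ofReal_div, Complex.ofReal_div,
        Complex.ofReal_one, Complex.ofReal_sin, Complex.ofReal_mul]
      ring
  have h8 := h7.mul_left ((2*x)⁻¹)
  have h2x : (2*x) ≠ 0 := by simpa using hx0
  have hfun4 : (fun k : ℕ => (2*x)⁻¹ * (2 * x * ((-1:ℝ)^k / (((k:ℝ)+1)^2 - x^2)))) =
      fun k : ℕ => (-1:ℝ)^k / (((k:ℝ)+1)^2 - x^2) := by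
    funext k
    rw [inv_mul_cancel_left₀ h2x]
  rw [hfun4] at h8
  rw [h8.tsum_eq]
  field_simp
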